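/- There exists exactly one pair (Y_1, Y_2) of formal power series in ℂ[[z_1, z_2]] such that Y_1 does not depend on the variable z_2 and z_2·Y_2 = z_2 + z_1·z_2·(1+z_2)·Y_2² + z_1·(1+z_2)·(Y_2 − Y_1) holds in ℂ[[z_1, z_2]]. Moreover, for this pair, Y_1 is the specialization of Y_2 at z_2 = 0. -/

import Mathlib

noncomputable section
namespace EulerAux

abbrev R := PowerSeries ℂ
abbrev A := PowerSeries R

def fm (i j : ℕ) : Fin 2 →₀ ℕ := Finsupp.single 0 i + Finsupp.single 1 j

@[simp] lemma fm_apply_zero (i j : ℕ) : fm i j 0 = i := by simp [fm]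
@[simp] lemma fm_apply_one (i j : ℕ) : fm i j 1 = j := by simp [fm]

lemma fm_eq (m : Fin 2 →₀ ℕ) : fm (m 0) (m 1) = m := by
  ext s; fin_cases s <;> simp

lemma eq_fm_iff (m : Fin 2 →₀ ℕ) (i j : ℕ) : m = fm i j ↔ m 0 = i ∧ m 1 = j := by
  constructor
  · rintro rfl; simp
  · rintro ⟨h1, h2⟩; rw [← fm_eq m, h1, h2]

lemma fm_add (i j k l : ℕ) : fm i k + fm j l = fm (i + j) (k + l) := by
  ext s; fin_cases s <;> simp

def phiFun (F : A) : MvPowerSeries (Fin 2) ℂ :=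
  fun m => PowerSeries.coeff (m 1) (PowerSeries.coeff (m 0) F)

lemma coeff_phiFun (F : A) (m : Fin 2 →₀ ℕ) :
    MvPowerSeries.coeff m (phiFun F) =
      PowerSeries.coeff (m 1) (PowerSeries.coeff (m 0) F) := rfl

def Φ : A →+* MvPowerSeries (Fin 2) ℂ where
  toFun := phiFun
  map_one' := by
    ext m
    rw [coeff_phiFun, MvPowerSeries.coeff_one]
    rcases eq_or_ne (m 0) 0 with h0 | h0
    · rcases eq_or_ne (m 1) 0 with h1 | h1
      · have : m = 0 := by rw [← fm_eq m, h0, h1]; ext s; fin_cases s <;> simp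
        simp [this, h0, h1, PowerSeries.coeff_one]
      · have : m ≠ 0 := fun h => h1 (by simp [h])
        simp [this, h0, PowerSeries.coeff_one, h1]
    · have : m ≠ 0 := fun h => h0 (by simp [h])
      simp [this, PowerSeries.coeff_one, h0]
  map_mul' := by
    intro F G
    ext m
    rw [coeff_phiFun, MvPowerSeries.coeff_mul, PowerSeries.coeff_mul, map_sum]
    simp only [PowerSeries.coeff_mul, Finset.sum_mul, Finset.mul_sum]
    rw [← Finset.sum_product']
    refine Finset.sum_nbij' (fun pq => (fm pq.1.1 pq.2.1, fm pq.1.2 pq.2.2))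
      (fun r => ((r.1 0, r.2 0), (r.1 1, r.2 1))) ?_ ?_ ?_ ?_ ?_
    · rintro ⟨⟨i, j⟩, ⟨k, l⟩⟩ h
      simp only [Finset.mem_product, Finset.HasAntidiagonal.mem_antidiagonal] at h
      rw [Finset.HasAntidiagonal.mem_antidiagonal, fm_add, h.1, h.2, fm_eq]
    · rintro ⟨r1, r2⟩ h
      rw [Finset.HasAntidiagonal.mem_antidiagonal] at h
      simp only [Finset.mem_product, Finset.HasAntidiagonal.mem_antidiagonal]
      constructor
      · rw [← Finsupp.add_apply, h]
      · rw [← Finsupp.add_apply, h]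
    · rintro ⟨⟨i, j⟩, ⟨k, l⟩⟩ _; simp
    · rintro ⟨r1, r2⟩ _; simp [fm_eq]
    · rintro ⟨⟨i, j⟩, ⟨k, l⟩⟩ _
      simp [coeff_phiFun]
  map_zero' := by ext m; simp [coeff_phiFun]
  map_add' := by intro F G; ext m; simp [coeff_phiFun]


lemma coeff_Phi (F : A) (m : Fin 2 →₀ ℕ) :
    MvPowerSeries.coeff m (Φ F) =
      PowerSeries.coeff (m 1) (PowerSeries.coeff (m 0) F) := rfl

def Ψ (G : MvPowerSeries (Fin 2) ℂ) : A :=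
  PowerSeries.mk fun n => PowerSeries.mk fun k => MvPowerSeries.coeff (fm n k) G

lemma Phi_Psi (G : MvPowerSeries (Fin 2) ℂ) : Φ (Ψ G) = G := by
  ext m
  rw [coeff_Phi, Ψ, PowerSeries.coeff_mk, PowerSeries.coeff_mk, fm_eq]

lemma Phi_injective : Function.Injective Φ := by
  intro F G h
  ext n k
  have := congrArg (MvPowerSeries.coeff (fm n k)) h
  rwa [coeff_Phi, coeff_Phi, fm_apply_zero, fm_apply_one] at this

def z₁ : A := PowerSeries.X
def z₂ : A := PowerSeries.C PowerSeries.X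

lemma Phi_z₁ : Φ z₁ = MvPowerSeries.X 0 := by
  ext m
  rw [coeff_Phi, MvPowerSeries.coeff_X, z₁, PowerSeries.coeff_X]
  have : m = Finsupp.single 0 1 ↔ m 0 = 1 ∧ m 1 = 0 := by
    rw [show (Finsupp.single 0 1 : Fin 2 →₀ ℕ) = fm 1 0 by ext s; fin_cases s <;> simp,
      eq_fm_iff]
  rcases eq_or_ne (m 0) 1 with h0 | h0
  · rcases eq_or_ne (m 1) 0 with h1 | h1
    · simp [this, h0, h1, PowerSeries.coeff_one]
    · simp [this, h0, h1, PowerSeries.coeff_one]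
  · simp [this, h0]

lemma Phi_z₂ : Φ z₂ = MvPowerSeries.X 1 := by
  ext m
  rw [coeff_Phi, MvPowerSeries.coeff_X, z₂, PowerSeries.coeff_C]
  have : m = Finsupp.single 1 1 ↔ m 0 = 0 ∧ m 1 = 1 := by
    rw [show (Finsupp.single 1 1 : Fin 2 →₀ ℕ) = fm 0 1 by ext s; fin_cases s <;> simp,
      eq_fm_iff]
  rcases eq_or_ne (m 0) 0 with h0 | h0
  · simp [this, h0, PowerSeries.coeff_X]
  · simp [this, h0]

/-- The coefficient sequence (in `z₂`) of `Y₂` by powers of `z₁`. -/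
def a : ℕ → R
  | 0 => 1
  | n + 1 => (1 + PowerSeries.X) *
      (((Finset.HasAntidiagonal.antidiagonal n).attach.sum fun p => a p.1.1 * a p.1.2) +
        PowerSeries.mk fun k => PowerSeries.coeff (k + 1) (a n))
decreasing_by
  · have := Finset.HasAntidiagonal.mem_antidiagonal.mp p.2
    omega
  · have := Finset.HasAntidiagonal.mem_antidiagonal.mp p.2
    omega
  · omega

lemma a_zero : a 0 = 1 := by rw [a]

lemma a_succ (n : ℕ) : a (n + 1) = (1 + PowerSeries.X) *
    (((Finset.HasAntidiagonal.antidiagonal n).sum fun p => a p.1 * a p.2) +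
      PowerSeries.mk fun k => PowerSeries.coeff (k + 1) (a n)) := by
  rw [a, ← Finset.sum_attach (Finset.HasAntidiagonal.antidiagonal n) (fun p => a p.1 * a p.2)]

open PowerSeries in
lemma shift_lemma (f : R) :
    f - PowerSeries.C (PowerSeries.constantCoeff f) =
      PowerSeries.X * PowerSeries.mk fun k => PowerSeries.coeff (k + 1) f := by
  ext k
  cases k with
  | zero => simp [PowerSeries.coeff_zero_eq_constantCoeff]
  | succ k => simp [PowerSeries.coeff_succ_X_mul, PowerSeries.coeff_C]

open PowerSeries in
lemma eq_iff (B₁ B₂ : A) :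
    z₂ * B₂ = z₂ + z₁ * z₂ * (1 + z₂) * B₂ ^ 2 + z₁ * (1 + z₂) * (B₂ - B₁) ↔
    (PowerSeries.X * coeff 0 B₂ = PowerSeries.X ∧
     ∀ n : ℕ, PowerSeries.X * coeff (n + 1) B₂ =
       PowerSeries.X * (1 + PowerSeries.X) *
         ((Finset.HasAntidiagonal.antidiagonal n).sum fun p => coeff p.1 B₂ * coeff p.2 B₂) +
       (1 + PowerSeries.X) * (coeff n B₂ - coeff n B₁)) := by
  have hnorm : z₂ + z₁ * z₂ * (1 + z₂) * B₂ ^ 2 + z₁ * (1 + z₂) * (B₂ - B₁) =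
      z₂ + PowerSeries.X * (PowerSeries.C (PowerSeries.X * (1 + PowerSeries.X)) * B₂ ^ 2
        + PowerSeries.C (1 + PowerSeries.X) * (B₂ - B₁)) := by
    simp only [z₁, z₂, map_mul, map_add, map_one]
    ring
  rw [hnorm]
  constructor
  · intro h
    constructor
    · have := congrArg (coeff 0) h
      simpa [z₂, coeff_C_mul, coeff_C, coeff_zero_X_mul] using this
    · intro n
      have := congrArg (coeff (n + 1)) h
      rw [z₂, coeff_C_mul, map_add, coeff_C, coeff_succ_X_mul, map_add, coeff_C_mul,
        coeff_C_mul, sq, coeff_mul] at this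
      simpa [mul_assoc, mul_sub] using this
  · rintro ⟨h0, hs⟩
    refine PowerSeries.ext fun n => ?_
    cases n with
    | zero => simpa [z₂, coeff_C_mul, coeff_C, coeff_zero_X_mul] using h0
    | succ n =>
      rw [z₂, coeff_C_mul, map_add, coeff_C, coeff_succ_X_mul, map_add, coeff_C_mul,
        coeff_C_mul, sq, coeff_mul]
      have := hs n
      simpa [mul_assoc, mul_sub] using this

/-- canonical solution -/
def B₂c : A := PowerSeries.mk a
def B₁c : A := PowerSeries.mk fun n => PowerSeries.C (PowerSeries.constantCoeff (a n))

open PowerSeries in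
lemma exists_sol : z₂ * B₂c = z₂ + z₁ * z₂ * (1 + z₂) * B₂c ^ 2 + z₁ * (1 + z₂) * (B₂c - B₁c) := by
  rw [eq_iff]
  constructor
  · rw [B₂c, coeff_mk, a_zero, mul_one]
  · intro n
    simp only [B₂c, B₁c, coeff_mk]
    rw [a_succ n, shift_lemma (a n)]
    ring

open PowerSeries in
lemma B1_const (B₁ : A) (h1 : ∀ n k : ℕ, k ≠ 0 → coeff k (coeff n B₁) = 0) (n : ℕ) :
    coeff n B₁ = C (constantCoeff (coeff n B₁)) := by
  ext k
  cases k with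
  | zero => simp [coeff_zero_eq_constantCoeff]
  | succ k => simp [coeff_C, h1 n (k + 1) (Nat.succ_ne_zero k)]

open PowerSeries in
lemma unique_sol (B₁ B₂ : A)
    (h1 : ∀ n k : ℕ, k ≠ 0 → coeff k (coeff n B₁) = 0)
    (heq : z₂ * B₂ = z₂ + z₁ * z₂ * (1 + z₂) * B₂ ^ 2 + z₁ * (1 + z₂) * (B₂ - B₁)) :
    B₂ = B₂c ∧ B₁ = B₁c := by
  rw [eq_iff] at heq
  obtain ⟨h0, hs⟩ := heq
  have hXne : (X : R) ≠ 0 := X_ne_zero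
  -- constant coefficients relation
  have hconst : ∀ n : ℕ, constantCoeff (coeff n B₁) = constantCoeff (coeff n B₂) := by
    intro n
    have := congrArg (constantCoeff) (hs n)
    simp only [map_mul, map_add, map_sub, map_one, constantCoeff_X, zero_mul, mul_zero,
      zero_add, zero_mul, one_mul, mul_one] at this
    have h2 : constantCoeff (coeff n B₂) - constantCoeff (coeff n B₁) = 0 := by
      linear_combination -this
    linear_combination -h2
  -- B₂ coefficients by strong induction
  have hA : ∀ n : ℕ, coeff n B₂ = a n := by
    intro n
    induction n using Nat.strong_induction_on with
    | _ n ih =>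
      match n with
      | 0 =>
        rw [a_zero]
        apply mul_left_cancel₀ hXne
        rw [h0, mul_one]
      | m + 1 =>
        apply mul_left_cancel₀ hXne
        rw [hs m]
        have hSm : ((Finset.HasAntidiagonal.antidiagonal m).sum fun p => coeff p.1 B₂ * coeff p.2 B₂) =
            (Finset.HasAntidiagonal.antidiagonal m).sum fun p => a p.1 * a p.2 := by
          refine Finset.sum_congr rfl fun p hp => ?_
          rw [Finset.HasAntidiagonal.mem_antidiagonal] at hp
          rw [ih p.1 (by omega), ih p.2 (by omega)]
        have hm : coeff m B₂ = a m := ih m (by omega)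
        have hB1m : coeff m B₁ = C (constantCoeff (a m)) := by
          rw [B1_const B₁ h1 m, hconst m, hm]
        rw [hSm, hm, hB1m, shift_lemma (a m), a_succ m]
        ring
  refine ⟨?_, ?_⟩
  · exact PowerSeries.ext fun n => by rw [hA n, B₂c, coeff_mk]
  · refine PowerSeries.ext fun n => ?_
    rw [B₁c, coeff_mk, B1_const B₁ h1 n, hconst n, hA n]

open PowerSeries in
lemma cond_iff (F : A) :
    (∀ m : Fin 2 →₀ ℕ, MvPowerSeries.coeff m (Φ F) ≠ 0 → m 1 = 0) ↔
    (∀ n k : ℕ, k ≠ 0 → coeff k (coeff n F) = 0) := by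
  constructor
  · intro h n k hk
    by_contra hne
    have := h (fm n k) (by rwa [coeff_Phi, fm_apply_zero, fm_apply_one])
    rw [fm_apply_one] at this
    exact hk this
  · intro h m hm
    by_contra hne
    exact hm (by rw [coeff_Phi]; exact h (m 0) (m 1) hne)

lemma eqn_iff (F₁ F₂ : A) :
    (MvPowerSeries.X 1 : MvPowerSeries (Fin 2) ℂ) * Φ F₂ =
      MvPowerSeries.X 1 + MvPowerSeries.X 0 * MvPowerSeries.X 1 * (1 + MvPowerSeries.X 1) *
        (Φ F₂) ^ 2 + MvPowerSeries.X 0 * (1 + MvPowerSeries.X 1) * (Φ F₂ - Φ F₁) ↔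
    z₂ * F₂ = z₂ + z₁ * z₂ * (1 + z₂) * F₂ ^ 2 + z₁ * (1 + z₂) * (F₂ - F₁) := by
  rw [← Phi_z₁, ← Phi_z₂, ← map_one Φ, ← map_mul, ← map_pow, ← map_add Φ, ← map_sub,
    ← map_mul, ← map_mul, ← map_mul, ← map_mul, ← map_mul, ← map_add Φ, ← map_add Φ]
  exact Phi_injective.eq_iff

open PowerSeries in
lemma any_sol_eq (p : MvPowerSeries (Fin 2) ℂ × MvPowerSeries (Fin 2) ℂ)
    (hc : ∀ m : Fin 2 →₀ ℕ, MvPowerSeries.coeff m p.1 ≠ 0 → m 1 = 0)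
    (he : (MvPowerSeries.X 1 : MvPowerSeries (Fin 2) ℂ) * p.2 =
      MvPowerSeries.X 1 + MvPowerSeries.X 0 * MvPowerSeries.X 1 * (1 + MvPowerSeries.X 1) *
        p.2 ^ 2 + MvPowerSeries.X 0 * (1 + MvPowerSeries.X 1) * (p.2 - p.1)) :
    p = (Φ B₁c, Φ B₂c) := by
  obtain ⟨q1, q2⟩ := p
  have hq1 : Φ (Ψ q1) = q1 := Phi_Psi q1
  have hq2 : Φ (Ψ q2) = q2 := Phi_Psi q2
  rw [← hq1, ← hq2] at hc he ⊢
  have h1 := (cond_iff (Ψ q1)).mp hc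
  have h2 := (eqn_iff (Ψ q1) (Ψ q2)).mp he
  obtain ⟨e2, e1⟩ := unique_sol (Ψ q1) (Ψ q2) h1 h2
  rw [e1, e2]

end EulerAux

open MvPowerSeries EulerAux

/-- There is exactly one pair `(Y₁, Y₂)` of formal power series in
`ℂ[[z₁, z₂]]` with `Y₁` independent of `z₂` satisfying
`z₂ Y₂ = z₂ + z₁ z₂ (1+z₂) Y₂² + z₁ (1+z₂) (Y₂ − Y₁)`;
moreover `Y₁` is the specialization of `Y₂` at `z₂ = 0`.
(This encodes the enumeration of rooted planar Eulerian maps by edges and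
root degree, with `z₁ = t` and `z₂ = x − 1`.) -/
theorem eulerian_maps_kernel_unique :
    (∃! p : MvPowerSeries (Fin 2) ℂ × MvPowerSeries (Fin 2) ℂ,
      (∀ m : Fin 2 →₀ ℕ, MvPowerSeries.coeff m p.1 ≠ 0 → m 1 = 0) ∧
      (X 1 : MvPowerSeries (Fin 2) ℂ) * p.2 =
        X 1 + X 0 * X 1 * (1 + X 1) * p.2 ^ 2 + X 0 * (1 + X 1) * (p.2 - p.1)) ∧
    (∀ p : MvPowerSeries (Fin 2) ℂ × MvPowerSeries (Fin 2) ℂ,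
      ((∀ m : Fin 2 →₀ ℕ, MvPowerSeries.coeff m p.1 ≠ 0 → m 1 = 0) ∧
        (X 1 : MvPowerSeries (Fin 2) ℂ) * p.2 =
          X 1 + X 0 * X 1 * (1 + X 1) * p.2 ^ 2 + X 0 * (1 + X 1) * (p.2 - p.1)) →
      ∀ m : Fin 2 →₀ ℕ, m 1 = 0 →
        MvPowerSeries.coeff m p.1 = MvPowerSeries.coeff m p.2) := by
  have hcoeff1 : ∀ m : Fin 2 →₀ ℕ, MvPowerSeries.coeff m (Φ B₁c) =
      if m 1 = 0 then PowerSeries.constantCoeff (a (m 0)) else 0 := by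
    intro m
    rw [coeff_Phi, B₁c, PowerSeries.coeff_mk, PowerSeries.coeff_C]
  constructor
  · refine ⟨(Φ B₁c, Φ B₂c), ⟨?_, ?_⟩, ?_⟩
    · intro m hm
      by_contra hne
      rw [hcoeff1 m, if_neg hne] at hm
      exact hm rfl
    · exact (eqn_iff B₁c B₂c).mpr exists_sol
    · intro q ⟨hc, he⟩
      exact any_sol_eq q hc he
  · intro p ⟨hc, he⟩ m hm
    have := any_sol_eq p hc he
    rw [this]
    simp only
    rw [hcoeff1 m, if_pos hm, coeff_Phi, B₂c, PowerSeries.coeff_mk, hm,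
      ← PowerSeries.coeff_zero_eq_constantCoeff]
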